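/- Let e ≥ 1, f ≥ 0 with e ≥ f, let F be a proper affine flat in ℝ^(binom(e+2,2)−1), and let A ⊆ ℝ^2 with |A| = binom(f+2,2) such that A is not contained in any curve of degree at most f. Then |ψ_e(A) ∩ F| ≤ 1 + dim F. -/

import Mathlib

open scoped Classical

noncomputable section

/-- The zero set in `ℝ × ℝ` of a polynomial in two variables. -/
def zeroSet (p : MvPolynomial (Fin 2) ℝ) : Set (ℝ × ℝ) :=
  {x | MvPolynomial.eval ![x.1, x.2] p = 0}

/-- `C` is a curve of degree `e`: the zero set of a polynomial of total degree `e`. -/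
def IsCurve (e : ℕ) (C : Set (ℝ × ℝ)) : Prop :=
  ∃ p : MvPolynomial (Fin 2) ℝ, p.totalDegree = e ∧ C = zeroSet p

/-- `C` is a curve of degree at most `d` (and at least `1`). -/
def IsCurveLe (d : ℕ) (C : Set (ℝ × ℝ)) : Prop :=
  ∃ e, 1 ≤ e ∧ e ≤ d ∧ IsCurve e C

/-- Index set for the `d`-Veronese map: pairs `(n, m)` with `1 ≤ n + m ≤ d`.
It has `(d+2).choose 2 - 1` elements. -/
abbrev VIdx (d : ℕ) : Type :=
  {q : Fin (d + 1) × Fin (d + 1) // 1 ≤ (q.1 : ℕ) + (q.2 : ℕ) ∧ (q.1 : ℕ) + (q.2 : ℕ) ≤ d}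

/-- The `d`-Veronese map `ℝ² → ℝ^((d+2).choose 2 - 1)`. -/
def vero (d : ℕ) (a : ℝ × ℝ) : VIdx d → ℝ :=
  fun q => a.1 ^ (q.1.1 : ℕ) * a.2 ^ (q.1.2 : ℕ)

/-- Dimension of the affine hull of a set. -/
noncomputable def adim {α : Type*} (S : Set (α → ℝ)) : ℕ :=
  Module.finrank ℝ (affineSpan ℝ S).direction

/-- Dimension of an affine subspace. -/
noncomputable def fdim {α : Type*} (F : AffineSubspace ℝ (α → ℝ)) : ℕ :=
  Module.finrank ℝ F.direction

/-- Full monomial index set: pairs `(n, m)` with `n + m ≤ d` (including `(0,0)`). -/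
abbrev MIdx (d : ℕ) : Type :=
  {q : Fin (d + 1) × Fin (d + 1) // (q.1 : ℕ) + (q.2 : ℕ) ≤ d}

lemma sum_range_add_one (n : ℕ) : ∑ i ∈ Finset.range n, (i + 1) = (n + 1).choose 2 := by
  induction n with
  | zero => simp
  | succ n ih =>
    rw [Finset.sum_range_succ, ih, Nat.choose_succ_succ (n + 1) 1, Nat.choose_one_right,
      Nat.add_comm]

def midxEquiv (d : ℕ) : MIdx d ≃ Σ a : Fin (d + 1), Fin (d + 1 - a.1) where
  toFun q := ⟨q.1.1, ⟨q.1.2.1, by have := q.2; omega⟩⟩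
  invFun x := ⟨(x.1, ⟨x.2.1, by have := x.2.2; omega⟩), by have := x.2.2; simp; omega⟩
  left_inv q := rfl
  right_inv x := rfl

lemma card_MIdx (d : ℕ) : Fintype.card (MIdx d) = (d + 2).choose 2 := by
  rw [Fintype.card_congr (midxEquiv d), Fintype.card_sigma]
  simp only [Fintype.card_fin]
  rw [Fin.sum_univ_eq_sum_range (fun i => d + 1 - i) (d + 1)]
  have h1 : ∑ i ∈ Finset.range (d + 1), (d + 1 - i)
      = ∑ i ∈ Finset.range (d + 1), ((fun j => j + 1) (d + 1 - 1 - i)) := by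
    refine Finset.sum_congr rfl fun i hi => ?_
    simp only [Finset.mem_range] at hi
    show d + 1 - i = (d + 1 - 1 - i) + 1
    omega
  rw [h1, Finset.sum_range_reflect (fun j => j + 1) (d + 1), sum_range_add_one]

/-- The exponent finsupp of a monomial index. -/
def expo {d : ℕ} (q : MIdx d) : Fin 2 →₀ ℕ :=
  Finsupp.single 0 (q.1.1 : ℕ) + Finsupp.single 1 (q.1.2 : ℕ)

lemma expo_apply0 {d : ℕ} (q : MIdx d) : expo q 0 = (q.1.1 : ℕ) := by
  simp [expo, Finsupp.single_apply]

lemma expo_apply1 {d : ℕ} (q : MIdx d) : expo q 1 = (q.1.2 : ℕ) := by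
  simp [expo, Finsupp.single_apply]

lemma eval_monomial_expo {d : ℕ} (q : MIdx d) (c : ℝ) (x : ℝ × ℝ) :
    MvPolynomial.eval ![x.1, x.2] (MvPolynomial.monomial (expo q) c)
      = c * (x.1 ^ (q.1.1 : ℕ) * x.2 ^ (q.1.2 : ℕ)) := by
  rw [MvPolynomial.eval_monomial]
  unfold expo
  rw [Finsupp.prod_add_index' (fun a => pow_zero _) (fun a b₁ b₂ => pow_add _ _ _)]
  simp [Finsupp.prod_single_index]

lemma sum_expo {d : ℕ} (q : MIdx d) : (expo q).sum (fun _ e => e) = (q.1.1 : ℕ) + (q.1.2 : ℕ) := by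
  unfold expo
  rw [Finsupp.sum_add_index' (fun _ => rfl) (fun _ _ _ => rfl),
    Finsupp.sum_single_index rfl, Finsupp.sum_single_index rfl]

/-- The evaluation (interpolation) linear map from coefficient vectors to functions on `A`. -/
def evalMap (f : ℕ) (A : Finset (ℝ × ℝ)) : (MIdx f → ℝ) →ₗ[ℝ] (↥A → ℝ) where
  toFun c := fun a => ∑ q : MIdx f, c q * ((a : ℝ × ℝ).1 ^ (q.1.1 : ℕ) * (a : ℝ × ℝ).2 ^ (q.1.2 : ℕ))
  map_add' c₁ c₂ := by
    funext a; simp [add_mul, Finset.sum_add_distrib]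
  map_smul' r c := by
    funext a; simp [Finset.mul_sum, mul_assoc]

theorem stmt_6 (e f : ℕ) (he : 1 ≤ e) (hfe : f ≤ e)
    (F : AffineSubspace ℝ (VIdx e → ℝ)) (hF : F ≠ ⊤)
    (A : Finset (ℝ × ℝ)) (hcard : A.card = Nat.choose (f + 2) 2)
    (hA : ∀ C : Set (ℝ × ℝ), IsCurveLe f C → ¬(↑A ⊆ C)) :
    (vero e '' ↑A ∩ ↑F).ncard ≤ 1 + fdim F := by
  classical
  have hAne : A.Nonempty := by
    rw [← Finset.card_pos, hcard]
    exact Nat.choose_pos (by omega)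
  have midx_ext : ∀ q q' : MIdx f, (q.1.1 : ℕ) = (q'.1.1 : ℕ) → (q.1.2 : ℕ) = (q'.1.2 : ℕ) →
      q = q' := by
    intro q q' h1 h2
    exact Subtype.ext (Prod.ext (Fin.ext h1) (Fin.ext h2))
  -- the evaluation map is injective
  have hinj : Function.Injective (evalMap f A) := by
    rw [← LinearMap.ker_eq_bot, LinearMap.ker_eq_bot']
    intro c hc0
    set p : MvPolynomial (Fin 2) ℝ := ∑ q : MIdx f, MvPolynomial.monomial (expo q) (c q) with hp
    have hcoeff : ∀ q : MIdx f, MvPolynomial.coeff (expo q) p = c q := by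
      intro q
      rw [hp, MvPolynomial.coeff_sum]
      rw [Finset.sum_eq_single q]
      · simp [MvPolynomial.coeff_monomial]
      · intro q' _ hne
        rw [MvPolynomial.coeff_monomial, if_neg]
        intro h
        exact hne (midx_ext q' q (by rw [← expo_apply0 q', ← expo_apply0 q, h])
          (by rw [← expo_apply1 q', ← expo_apply1 q, h]))
      · intro h; exact absurd (Finset.mem_univ q) h
    have heval : ∀ x : ℝ × ℝ, MvPolynomial.eval ![x.1, x.2] p
        = ∑ q : MIdx f, c q * (x.1 ^ (q.1.1 : ℕ) * x.2 ^ (q.1.2 : ℕ)) := by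
      intro x
      rw [hp, map_sum]
      exact Finset.sum_congr rfl fun q _ => eval_monomial_expo q (c q) x
    have hevalA : ∀ a ∈ A, MvPolynomial.eval ![a.1, a.2] p = 0 := by
      intro a ha
      rw [heval]
      exact congrFun hc0 ⟨a, ha⟩
    have hdeg : p.totalDegree ≤ f := by
      rw [hp]
      refine MvPolynomial.totalDegree_finsetSum_le fun q _ => ?_
      refine le_trans (MvPolynomial.totalDegree_monomial_le _ _) ?_
      rw [show ((expo q).sum fun _ => id) = (expo q).sum (fun _ e => e) from rfl, sum_expo]
      exact q.2
    rcases Nat.eq_zero_or_pos p.totalDegree with h0 | h1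
    · -- constant polynomial case
      have hall := (MvPolynomial.totalDegree_eq_zero_iff _ p).mp h0
      have hq0 : ∀ q : MIdx f, (q.1.1 : ℕ) + (q.1.2 : ℕ) ≠ 0 → c q = 0 := by
        intro q hq
        by_contra hcq
        have hmem : expo q ∈ p.support := by
          rw [MvPolynomial.mem_support_iff, hcoeff]; exact hcq
        have h0' := hall _ hmem 0
        have h1' := hall _ hmem 1
        rw [expo_apply0] at h0'
        rw [expo_apply1] at h1'
        omega
      set q₀ : MIdx f := ⟨(0, 0), by simp⟩ with hq₀def
      have hcq₀ : c q₀ = 0 := by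
        obtain ⟨a, ha⟩ := hAne
        have hz := hevalA a ha
        rw [heval] at hz
        rw [Finset.sum_eq_single q₀] at hz
        · simpa [hq₀def] using hz
        · intro q _ hne
          rw [hq0 q, zero_mul]
          intro hsum
          exact hne (midx_ext q q₀ (by show (q.1.1 : ℕ) = 0; omega) (by show (q.1.2 : ℕ) = 0; omega))
        · intro h; exact absurd (Finset.mem_univ q₀) h
      funext q
      by_cases hq : (q.1.1 : ℕ) + (q.1.2 : ℕ) = 0
      · have : q = q₀ := midx_ext q q₀ (by show (q.1.1 : ℕ) = 0; omega) (by show (q.1.2 : ℕ) = 0; omega)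
        rw [this]; exact hcq₀
      · exact hq0 q hq
    · -- positive degree case: contradiction with hA
      exfalso
      refine hA (zeroSet p) ⟨p.totalDegree, h1, hdeg, p, rfl, rfl⟩ ?_
      intro a ha
      exact hevalA a (Finset.mem_coe.mp ha)
  have hsurj : Function.Surjective (evalMap f A) :=
    (LinearMap.injective_iff_surjective_of_finrank_eq_finrank (by
      rw [Module.finrank_pi, Module.finrank_pi, card_MIdx, Fintype.card_coe, hcard])).mp hinj
  -- the subset of A landing in F
  set S : Finset (ℝ × ℝ) := A.filter (fun a => vero e a ∈ F) with hS
  have hSA : ∀ x : ↥S, (x : ℝ × ℝ) ∈ A := fun x => (Finset.mem_filter.mp x.2).1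
  have hSF : ∀ x : ↥S, vero e (x : ℝ × ℝ) ∈ F := fun x => (Finset.mem_filter.mp x.2).2
  have hindep : AffineIndependent ℝ (fun x : ↥S => vero e (x : ℝ × ℝ)) := by
    rw [affineIndependent_iff]
    intro s w hw0 hw1 i₀ hi₀
    obtain ⟨c, hc⟩ := hsurj (Pi.single (⟨(i₀ : ℝ × ℝ), hSA i₀⟩ : ↥A) 1)
    have key : ∀ q : MIdx f,
        ∑ i ∈ s, w i * ((i : ℝ × ℝ).1 ^ (q.1.1 : ℕ) * (i : ℝ × ℝ).2 ^ (q.1.2 : ℕ)) = 0 := by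
      intro q
      rcases Nat.eq_zero_or_pos ((q.1.1 : ℕ) + (q.1.2 : ℕ)) with h0 | h1
      · have hn : (q.1.1 : ℕ) = 0 := by omega
        have hm : (q.1.2 : ℕ) = 0 := by omega
        simp only [hn, hm, pow_zero, one_mul, mul_one]
        exact hw0
      · have hle := q.2
        have hn1 : ((q.1.1 : ℕ)) < e + 1 := by omega
        have hm1 : ((q.1.2 : ℕ)) < e + 1 := by omega
        set ιq : VIdx e := ⟨(⟨(q.1.1 : ℕ), hn1⟩, ⟨(q.1.2 : ℕ), hm1⟩), ⟨h1, by simp; omega⟩⟩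
          with hιq
        have h2 := congrFun hw1 ιq
        rw [Finset.sum_apply] at h2
        simpa [vero, hιq] using h2
    have hkey2 : ∑ i ∈ s, w i * (evalMap f A c ⟨(i : ℝ × ℝ), hSA i⟩) = 0 := by
      have hstep : ∀ i ∈ s, w i * (evalMap f A c ⟨(i : ℝ × ℝ), hSA i⟩)
          = ∑ q : MIdx f,
              c q * (w i * ((i : ℝ × ℝ).1 ^ (q.1.1 : ℕ) * (i : ℝ × ℝ).2 ^ (q.1.2 : ℕ))) := by
        intro i _
        have : evalMap f A c ⟨(i : ℝ × ℝ), hSA i⟩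
            = ∑ q : MIdx f, c q * ((i : ℝ × ℝ).1 ^ (q.1.1 : ℕ) * (i : ℝ × ℝ).2 ^ (q.1.2 : ℕ)) :=
          rfl
        rw [this, Finset.mul_sum]
        exact Finset.sum_congr rfl fun q _ => by ring
      rw [Finset.sum_congr rfl hstep, Finset.sum_comm]
      refine Finset.sum_eq_zero fun q _ => ?_
      rw [← Finset.mul_sum, key q, mul_zero]
    rw [hc] at hkey2
    have hstep2 : ∀ i ∈ s, w i * (Pi.single (⟨(i₀ : ℝ × ℝ), hSA i₀⟩ : ↥A) (1 : ℝ) : ↥A → ℝ)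
        ⟨(i : ℝ × ℝ), hSA i⟩ = if i = i₀ then w i else 0 := by
      intro i _
      rw [Pi.single_apply]
      by_cases h : i = i₀
      · subst h; simp
      · have hne : (⟨(i : ℝ × ℝ), hSA i⟩ : ↥A) ≠ ⟨(i₀ : ℝ × ℝ), hSA i₀⟩ := by
          intro hEq
          have hv : ((⟨(i : ℝ × ℝ), hSA i⟩ : ↥A) : ℝ × ℝ)
              = ((⟨(i₀ : ℝ × ℝ), hSA i₀⟩ : ↥A) : ℝ × ℝ) := congrArg Subtype.val hEq
          exact h (Subtype.ext hv)
        rw [if_neg hne, mul_zero, if_neg h]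
    rw [Finset.sum_congr rfl hstep2, Finset.sum_ite_eq' s i₀ w, if_pos hi₀] at hkey2
    exact hkey2
  have hset : vero e '' ↑A ∩ ↑F = vero e '' ↑S := by
    ext x
    constructor
    · rintro ⟨⟨a, ha, rfl⟩, hxF⟩
      exact ⟨a, Finset.mem_coe.mpr (Finset.mem_filter.mpr ⟨Finset.mem_coe.mp ha, hxF⟩), rfl⟩
    · rintro ⟨a, ha, rfl⟩
      obtain ⟨h1, h2⟩ := Finset.mem_filter.mp (Finset.mem_coe.mp ha)
      exact ⟨⟨a, Finset.mem_coe.mpr h1, rfl⟩, h2⟩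
  calc (vero e '' ↑A ∩ ↑F).ncard = (vero e '' ↑S).ncard := by rw [hset]
    _ ≤ (↑S : Set (ℝ × ℝ)).ncard := Set.ncard_image_le S.finite_toSet
    _ = S.card := Set.ncard_coe_finset S
    _ = Fintype.card ↥S := (Fintype.card_coe S).symm
    _ ≤ Module.finrank ℝ
          (vectorSpan ℝ (Set.range fun x : ↥S => vero e (x : ℝ × ℝ))) + 1 :=
        hindep.card_le_finrank_succ
    _ ≤ fdim F + 1 := by
        refine Nat.add_le_add_right ?_ 1
        have hsub : affineSpan ℝ (Set.range fun x : ↥S => vero e (x : ℝ × ℝ)) ≤ F := by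
          rw [affineSpan_le]
          rintro y ⟨x, rfl⟩
          exact hSF x
        have hdir := AffineSubspace.direction_le hsub
        rw [direction_affineSpan] at hdir
        exact Submodule.finrank_mono hdir
    _ = 1 + fdim F := Nat.add_comm _ 1
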